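/- arXiv:1912.06667 — 2 statements merged into one kernel-verified Lean document; each statement's English description precedes it below -/
import Mathlib

section
/- (Theorem 1, inequality part.) Let A be a nonempty finite set of treatments, let (X, μ) be a probability (measure) space, and for each a ∈ A let f_a : X → ℝ be an integrable measurable function. Let 𝒢 be a grouping of A and let 𝒢̃ be a grouping of A that is finer than 𝒢. Then V*(𝒢̃) ≥ V*(𝒢), where V*(𝒢) = ∫ max_{G ∈ 𝒢} |G|⁻¹ ∑_{a ∈ G} f_a(x) dμ(x). -/
open MeasureTheory

noncomputable def avgOn {α : Type*} (v : α → ℝ) (G : Finset α) : ℝ :=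
  (G.card : ℝ)⁻¹ * ∑ a ∈ G, v a

noncomputable def groupMax {α : Type*} (𝒢 : Finset (Finset α)) (g : Finset α → ℝ) : ℝ :=
  if h : 𝒢.Nonempty then 𝒢.sup' h g else 0

def IsGrouping {α : Type*} [DecidableEq α] (A : Finset α) (𝒢 : Finset (Finset α)) : Prop :=
  (∀ G ∈ 𝒢, G.Nonempty) ∧
  (∀ G ∈ 𝒢, ∀ G' ∈ 𝒢, G ≠ G' → Disjoint G G') ∧
  𝒢.biUnion id = A

def Finer {α : Type*} (𝒢' 𝒢 : Finset (Finset α)) : Prop :=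
  ∀ G' ∈ 𝒢', ∃ G ∈ 𝒢, G' ⊆ G

noncomputable def optVal {α X : Type*} [MeasurableSpace X] (μ : Measure X)
    (f : α → X → ℝ) (𝒢 : Finset (Finset α)) : ℝ :=
  ∫ x, groupMax 𝒢 (fun G => avgOn (fun a => f a x) G) ∂μ

/-- integrability of a finite sup' -/
lemma integrable_sup'_aux {X ι : Type*} [MeasurableSpace X] (μ : Measure X)
    (s : Finset ι) (hs : s.Nonempty) (g : ι → X → ℝ)
    (hg : ∀ i ∈ s, Integrable (g i) μ) :
    Integrable (fun x => s.sup' hs (fun i => g i x)) μ := by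
  induction hs using Finset.Nonempty.cons_induction with
  | singleton a => simpa using hg a (by simp)
  | cons a s ha hs ih =>
      have : (fun x => (Finset.cons a s ha).sup' (Finset.cons_nonempty ha) (fun i => g i x))
          = fun x => g a x ⊔ s.sup' hs (fun i => g i x) := by
        funext x; exact Finset.sup'_cons hs (fun i => g i x)
      rw [this]
      exact (hg a (by simp)).sup (ih (fun i hi => hg i (Finset.mem_cons_of_mem hi)))

/-- pointwise key lemma -/
lemma avg_le_sup' {α : Type*} [DecidableEq α] (A : Finset α)
    (𝒢 𝒢' : Finset (Finset α)) (h𝒢 : IsGrouping A 𝒢) (h𝒢' : IsGrouping A 𝒢')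
    (hfiner : Finer 𝒢' 𝒢) (h' : 𝒢'.Nonempty)
    (v : α → ℝ) {G : Finset α} (hG : G ∈ 𝒢) :
    avgOn v G ≤ 𝒢'.sup' h' (avgOn v) := by
  obtain ⟨hne, hdisj, hcover⟩ := h𝒢
  obtain ⟨hne', hdisj', hcover'⟩ := h𝒢'
  set S : Finset (Finset α) := 𝒢'.filter (· ⊆ G) with hS
  have hsubS : ∀ G'' ∈ S, G'' ⊆ G := fun G'' h => (Finset.mem_filter.mp h).2
  have hSG' : ∀ G'' ∈ S, G'' ∈ 𝒢' := fun G'' h => (Finset.mem_filter.mp h).1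
  -- G = S.biUnion id
  have hGA : G ⊆ A := by
    intro a ha; rw [← hcover]; exact Finset.mem_biUnion.mpr ⟨G, hG, ha⟩
  have hcov : G = S.biUnion id := by
    apply Finset.Subset.antisymm
    · intro a ha
      have haA : a ∈ A := hGA ha
      rw [← hcover'] at haA
      obtain ⟨G'', hG''𝒢', haG''⟩ := Finset.mem_biUnion.mp haA
      obtain ⟨G₀, hG₀, hsub⟩ := hfiner G'' hG''𝒢'
      have : G = G₀ := by
        by_contra hne0
        exact (Finset.disjoint_left.mp (hdisj G hG G₀ hG₀ hne0) ha) (hsub haG'')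
      refine Finset.mem_biUnion.mpr ⟨G'', Finset.mem_filter.mpr ⟨hG''𝒢', ?_⟩, haG''⟩
      rw [this]; exact hsub
    · intro a ha
      obtain ⟨G'', hG'', haG''⟩ := Finset.mem_biUnion.mp ha
      exact hsubS G'' hG'' haG''
  have hSdisj : ∀ G₁ ∈ S, ∀ G₂ ∈ S, G₁ ≠ G₂ → Disjoint (id G₁) (id G₂) := by
    intro G₁ h1 G₂ h2 h12
    exact hdisj' G₁ (hSG' _ h1) G₂ (hSG' _ h2) h12
  have hsum : ∑ a ∈ G, v a = ∑ G'' ∈ S, ∑ a ∈ G'', v a := by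
    rw [hcov]; exact Finset.sum_biUnion hSdisj
  have hcard : (G.card : ℝ) = ∑ G'' ∈ S, (G''.card : ℝ) := by
    rw [hcov]
    rw [Finset.card_biUnion (fun x hx y hy h => hSdisj x hx y hy h)]
    push_cast; rfl
  set M := 𝒢'.sup' h' (avgOn v) with hM
  have hbound : ∀ G'' ∈ S, ∑ a ∈ G'', v a ≤ (G''.card : ℝ) * M := by
    intro G'' h
    have hle : avgOn v G'' ≤ M := Finset.le_sup' _ (hSG' _ h)
    have hcpos : (0:ℝ) < G''.card := by
      exact_mod_cast Finset.card_pos.mpr (hne' _ (hSG' _ h))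
    have := mul_le_mul_of_nonneg_left hle hcpos.le
    rw [avgOn, ← mul_assoc, mul_inv_cancel₀ hcpos.ne', one_mul] at this
    exact this
  have hGpos : (0:ℝ) < G.card := by
    exact_mod_cast Finset.card_pos.mpr (hne _ hG)
  have : ∑ a ∈ G, v a ≤ (G.card : ℝ) * M := by
    rw [hsum, hcard, Finset.sum_mul]
    exact Finset.sum_le_sum hbound
  rw [avgOn]
  calc (G.card : ℝ)⁻¹ * ∑ a ∈ G, v a ≤ (G.card : ℝ)⁻¹ * ((G.card : ℝ) * M) := by
        exact mul_le_mul_of_nonneg_left this (inv_nonneg.mpr hGpos.le)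
    _ = M := by rw [← mul_assoc, inv_mul_cancel₀ hGpos.ne', one_mul]

/-- Theorem 1 (inequality part): a finer grouping never decreases the optimal value. -/
theorem optVal_le_of_finer {α X : Type*} [DecidableEq α] [MeasurableSpace X]
    (μ : Measure X) [IsProbabilityMeasure μ]
    (A : Finset α) (hA : A.Nonempty)
    (f : α → X → ℝ)
    (hmeas : ∀ a ∈ A, Measurable (f a))
    (hint : ∀ a ∈ A, Integrable (f a) μ)
    (𝒢 𝒢' : Finset (Finset α))
    (h𝒢 : IsGrouping A 𝒢) (h𝒢' : IsGrouping A 𝒢')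
    (hfiner : Finer 𝒢' 𝒢) :
    optVal μ f 𝒢 ≤ optVal μ f 𝒢' := by
  obtain ⟨a0, ha0⟩ := hA
  have hne𝒢 : 𝒢.Nonempty := by
    have := h𝒢.2.2 ▸ ha0
    obtain ⟨G, hG, -⟩ := Finset.mem_biUnion.mp this
    exact ⟨G, hG⟩
  have hne𝒢' : 𝒢'.Nonempty := by
    have := h𝒢'.2.2 ▸ ha0
    obtain ⟨G, hG, -⟩ := Finset.mem_biUnion.mp this
    exact ⟨G, hG⟩
  have hGA : ∀ G ∈ 𝒢, G ⊆ A := by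
    intro G hG a ha; rw [← h𝒢.2.2]; exact Finset.mem_biUnion.mpr ⟨G, hG, ha⟩
  have hGA' : ∀ G ∈ 𝒢', G ⊆ A := by
    intro G hG a ha; rw [← h𝒢'.2.2]; exact Finset.mem_biUnion.mpr ⟨G, hG, ha⟩
  have hintavg : ∀ (𝒦 : Finset (Finset α)), (∀ G ∈ 𝒦, G ⊆ A) →
      ∀ G ∈ 𝒦, Integrable (fun x => avgOn (fun a => f a x) G) μ := by
    intro 𝒦 h𝒦 G hG
    simp only [avgOn]
    exact (integrable_finset_sum G (fun a ha => hint a (h𝒦 G hG ha))).const_mul _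
  have hi1 : Integrable (fun x => groupMax 𝒢 (fun G => avgOn (fun a => f a x) G)) μ := by
    simp only [groupMax, dif_pos hne𝒢]
    exact integrable_sup'_aux μ 𝒢 hne𝒢 _ (hintavg 𝒢 hGA)
  have hi2 : Integrable (fun x => groupMax 𝒢' (fun G => avgOn (fun a => f a x) G)) μ := by
    simp only [groupMax, dif_pos hne𝒢']
    exact integrable_sup'_aux μ 𝒢' hne𝒢' _ (hintavg 𝒢' hGA')
  refine integral_mono hi1 hi2 (fun x => ?_)
  simp only [groupMax, dif_pos hne𝒢, dif_pos hne𝒢']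
  apply Finset.sup'_le
  intro G hG
  exact avg_le_sup' A 𝒢 𝒢' h𝒢 h𝒢' hfiner hne𝒢' (fun a => f a x) hG
end

section
/- Let A be a nonempty finite set of treatments, let (X, μ) be a probability space, and for each a ∈ A let f_a : X → ℝ be an integrable measurable function. Let 𝒢₀, 𝒢₁, …, 𝒢_k be a sequence of groupings of A such that 𝒢_{t+1} is finer than 𝒢_t for each t = 0, 1, …, k − 1 (as arises from cutting a hierarchical clustering tree at successively deeper levels). Then the optimal values are nondecreasing along the sequence: V*(𝒢₀) ≤ V*(𝒢₁) ≤ … ≤ V*(𝒢_k). -/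
open MeasureTheory

lemma integrable_sup' {ι X : Type*} [MeasurableSpace X] {μ : Measure X}
    {s : Finset ι} (hs : s.Nonempty) (g : ι → X → ℝ)
    (hg : ∀ i ∈ s, Integrable (g i) μ) :
    Integrable (fun x => s.sup' hs fun i => g i x) μ := by
  revert hg
  induction hs using Finset.Nonempty.cons_induction with
  | singleton i => intro hg; simpa using hg i (by simp)
  | cons i s hi hs ih =>
    intro hg
    have : (fun x => (Finset.cons i s hi).sup' (Finset.cons_nonempty hi) fun j => g j x)
        = fun x => g i x ⊔ s.sup' hs fun j => g j x := by
      funext x; exact Finset.sup'_cons hs _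
    rw [this]
    exact (hg i (by simp)).sup (ih fun j hj => hg j (by simp [hj]))

lemma grouping_nonempty {α : Type*} [DecidableEq α] {A : Finset α} (hA : A.Nonempty)
    {𝒢 : Finset (Finset α)} (h : IsGrouping A 𝒢) : 𝒢.Nonempty := by
  obtain ⟨a, ha⟩ := hA
  rw [← h.2.2] at ha
  obtain ⟨G, hG, -⟩ := Finset.mem_biUnion.mp ha
  exact ⟨G, hG⟩

lemma integrable_groupMax {α X : Type*} [DecidableEq α] [MeasurableSpace X] {μ : Measure X}
    {A : Finset α} (hA : A.Nonempty) {f : α → X → ℝ}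
    (hint : ∀ a ∈ A, Integrable (f a) μ)
    {𝒢 : Finset (Finset α)} (h : IsGrouping A 𝒢) :
    Integrable (fun x => groupMax 𝒢 (fun G => avgOn (fun a => f a x) G)) μ := by
  have hne := grouping_nonempty hA h
  have : (fun x => groupMax 𝒢 (fun G => avgOn (fun a => f a x) G))
      = fun x => 𝒢.sup' hne (fun G => avgOn (fun a => f a x) G) := by
    funext x; simp [groupMax, hne]
  rw [this]
  refine integrable_sup' hne _ fun G hG => ?_
  have : (fun x => avgOn (fun a => f a x) G)
      = fun x => (G.card : ℝ)⁻¹ * ∑ a ∈ G, f a x := by funext x; rfl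
  rw [this]
  refine (integrable_finset_sum G fun a ha => hint a ?_).const_mul _
  rw [← h.2.2]; exact Finset.mem_biUnion.mpr ⟨G, hG, ha⟩

/-- Pointwise: refining a grouping increases the max of group averages. -/
lemma groupMax_le_of_finer {α : Type*} [DecidableEq α] {A : Finset α} (hA : A.Nonempty)
    {𝒢 𝒢' : Finset (Finset α)} (h : IsGrouping A 𝒢) (h' : IsGrouping A 𝒢')
    (hf : Finer 𝒢' 𝒢) (v : α → ℝ) :
    groupMax 𝒢 (fun G => avgOn v G) ≤ groupMax 𝒢' (fun G => avgOn v G) := by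
  classical
  have hne := grouping_nonempty hA h
  have hne' := grouping_nonempty hA h'
  simp only [groupMax, dif_pos hne, dif_pos hne']
  set M := 𝒢'.sup' hne' (fun G => avgOn v G) with hM
  refine Finset.sup'_le hne _ fun G hG => ?_
  -- S : the groups of 𝒢' contained in G
  set S := 𝒢'.filter (· ⊆ G) with hS
  have hGS : G = S.biUnion id := by
    apply Finset.ext
    intro a
    constructor
    · intro ha
      have haA : a ∈ A := by
        rw [← h.2.2]; exact Finset.mem_biUnion.mpr ⟨G, hG, ha⟩
      rw [← h'.2.2] at haA
      obtain ⟨G'', hG'', ha''⟩ := Finset.mem_biUnion.mp haA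
      obtain ⟨H, hH, hsub⟩ := hf G'' hG''
      have : G = H := by
        by_contra hne
        exact (Finset.disjoint_left.mp (h.2.1 G hG H hH hne) ha) (hsub ha'')
      refine Finset.mem_biUnion.mpr ⟨G'', ?_, ha''⟩
      exact Finset.mem_filter.mpr ⟨hG'', this ▸ hsub⟩
    · intro ha
      obtain ⟨G'', hG'', ha''⟩ := Finset.mem_biUnion.mp ha
      exact (Finset.mem_filter.mp hG'').2 ha''
  have hdisj : ∀ G₁ ∈ S, ∀ G₂ ∈ S, G₁ ≠ G₂ → Disjoint (id G₁) (id G₂) := by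
    intro G₁ h₁ G₂ h₂ hne
    exact h'.2.1 G₁ (Finset.mem_filter.mp h₁).1 G₂ (Finset.mem_filter.mp h₂).1 hne
  have hcard : (G.card : ℝ) = ∑ G' ∈ S, (G'.card : ℝ) := by
    rw [hGS, Finset.card_biUnion hdisj]; push_cast; rfl
  have hsum : ∑ a ∈ G, v a = ∑ G' ∈ S, ∑ a ∈ G', v a := by
    rw [hGS, Finset.sum_biUnion hdisj]; rfl
  have hGpos : (0 : ℝ) < G.card := by
    exact_mod_cast Finset.card_pos.mpr (h.1 G hG)
  -- each inner sum ≤ card * M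
  have hle : ∀ G' ∈ S, ∑ a ∈ G', v a ≤ (G'.card : ℝ) * M := by
    intro G' hG'
    have hmem : G' ∈ 𝒢' := (Finset.mem_filter.mp hG').1
    have hpos : (0 : ℝ) < G'.card := by
      exact_mod_cast Finset.card_pos.mpr (h'.1 G' hmem)
    have havg : avgOn v G' ≤ M := Finset.le_sup' _ hmem
    have : (G'.card : ℝ) * avgOn v G' = ∑ a ∈ G', v a := by
      rw [avgOn, ← mul_assoc, mul_inv_cancel₀ hpos.ne', one_mul]
    rw [← this]
    exact mul_le_mul_of_nonneg_left havg hpos.le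
  calc avgOn v G = (G.card : ℝ)⁻¹ * ∑ G' ∈ S, ∑ a ∈ G', v a := by rw [avgOn, hsum]
    _ ≤ (G.card : ℝ)⁻¹ * ∑ G' ∈ S, (G'.card : ℝ) * M := by
        exact mul_le_mul_of_nonneg_left (Finset.sum_le_sum hle) (inv_nonneg.mpr hGpos.le)
    _ = (G.card : ℝ)⁻¹ * ((G.card : ℝ) * M) := by rw [← Finset.sum_mul, ← hcard]
    _ = M := by rw [← mul_assoc, inv_mul_cancel₀ hGpos.ne', one_mul]

/-- For a sequence of groupings `𝒢 0, 𝒢 1, …, 𝒢 k` of `A` in which each grouping is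
finer than its predecessor, the optimal values are nondecreasing along the sequence. -/
theorem optVal_monotone_of_finer_chain {α X : Type*} [DecidableEq α] [MeasurableSpace X]
    (μ : Measure X) [IsProbabilityMeasure μ]
    (A : Finset α) (hA : A.Nonempty)
    (f : α → X → ℝ)
    (hmeas : ∀ a ∈ A, Measurable (f a))
    (hint : ∀ a ∈ A, Integrable (f a) μ)
    (k : ℕ) (𝒢 : ℕ → Finset (Finset α))
    (h𝒢 : ∀ t ≤ k, IsGrouping A (𝒢 t))
    (hfiner : ∀ t < k, Finer (𝒢 (t + 1)) (𝒢 t)) :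
    ∀ s t, s ≤ t → t ≤ k → optVal μ f (𝒢 s) ≤ optVal μ f (𝒢 t) := by
  have step : ∀ t, t < k → optVal μ f (𝒢 t) ≤ optVal μ f (𝒢 (t + 1)) := by
    intro t htk
    refine integral_mono (integrable_groupMax hA hint (h𝒢 t htk.le))
      (integrable_groupMax hA hint (h𝒢 (t + 1) htk)) fun x => ?_
    exact groupMax_le_of_finer hA (h𝒢 t htk.le) (h𝒢 (t + 1) htk) (hfiner t htk) _
  intro s t
  induction t with
  | zero =>
    intro hst _
    obtain rfl : s = 0 := Nat.le_zero.mp hst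
    exact le_rfl
  | succ n ih =>
    intro hst htk
    rcases Nat.lt_or_ge s (n + 1) with h | h
    · have hsn : s ≤ n := Nat.lt_succ_iff.mp h
      have hnk : n ≤ k := le_trans (Nat.le_succ n) htk
      exact le_trans (ih hsn hnk) (step n (Nat.lt_of_succ_le htk))
    · obtain rfl : s = n + 1 := le_antisymm hst h
      exact le_rfl
end
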